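/- (Monotonicity lemma) For every integer n ≥ 1 and every integer N ≥ 0, writing k = ⌊N/2⌋, one has b_{N+2,n} ≤ (2k+2)·b_{N,n}; equivalently, the probabilities F_N(n) = b_{N,n}/(2^k k!) that a uniformly chosen odd permutation in O_N has no increasing subsequence of length greater than n satisfy F_{N+2}(n) ≤ F_N(n). -/

import Mathlib

/-- The domain on which odd permutations act: for N = 2k the set {−k,…,−1,1,…,k},
for N = 2k+1 the set {−k,…,k}. -/
noncomputable def domZ (N : ℕ) : Finset ℤ :=
  if N % 2 = 0 then (Finset.Icc (-((N / 2 : ℕ) : ℤ)) ((N / 2 : ℕ) : ℤ)).erase 0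
  else Finset.Icc (-((N / 2 : ℕ) : ℤ)) ((N / 2 : ℕ) : ℤ)

/-- σ is an odd permutation of the N-point domain: it fixes everything outside the
domain and satisfies σ(−m) = −σ(m). -/
def IsOddPerm (N : ℕ) (σ : Equiv.Perm ℤ) : Prop :=
  (∀ x : ℤ, x ∉ domZ N → σ x = x) ∧ ∀ x : ℤ, σ (-x) = -σ x

/-- σ has no increasing subsequence (within the N-point domain) of length greater than n. -/
def LisLE (N n : ℕ) (σ : Equiv.Perm ℤ) : Prop :=
  ∀ s : Finset ℤ, s ⊆ domZ N → (∀ i ∈ s, ∀ j ∈ s, i < j → σ i < σ j) → s.card ≤ n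

/-- b_{Nn}: the number of odd permutations of the N-point domain with no increasing
subsequence of length greater than n. -/
noncomputable def bN (N n : ℕ) : ℕ :=
  Nat.card {σ : Equiv.Perm ℤ // IsOddPerm N σ ∧ LisLE N n σ}

namespace BNMono

lemma perm_apply_inv_self (σ : Equiv.Perm ℤ) (x : ℤ) : σ (σ⁻¹ x) = x :=
  Equiv.apply_symm_apply σ x

def phiZ (M x : ℤ) : ℤ := if M < x then x - 1 else if x < -M then x + 1 else x
def psiZ (M y : ℤ) : ℤ := if M ≤ y then y + 1 else if y ≤ -M then y - 1 else y

lemma psi_phi {M x : ℤ} (hM : 1 ≤ M) (h1 : x ≠ M) (h2 : x ≠ -M) : psiZ M (phiZ M x) = x := by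
  unfold phiZ psiZ; split_ifs <;> omega

lemma phi_psi {M y : ℤ} (hM : 1 ≤ M) : phiZ M (psiZ M y) = y := by
  unfold phiZ psiZ; split_ifs <;> omega

lemma phi_mono {M a b : ℤ} (hM : 1 ≤ M) (h : phiZ M a < phiZ M b) : a < b := by
  unfold phiZ at h; split_ifs at h <;> omega

lemma phi_neg {M : ℤ} (hM : 1 ≤ M) (x : ℤ) : phiZ M (-x) = -phiZ M x := by
  unfold phiZ; split_ifs <;> omega

lemma mem_domZ (N : ℕ) (x : ℤ) :
    x ∈ domZ N ↔ -((N/2 : ℕ):ℤ) ≤ x ∧ x ≤ ((N/2:ℕ):ℤ) ∧ (N % 2 = 0 → x ≠ 0) := by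
  unfold domZ
  split_ifs with h
  · simp only [Finset.mem_erase, Finset.mem_Icc]; tauto
  · simp only [Finset.mem_Icc]; tauto

lemma mem_domZ2 (N : ℕ) (x : ℤ) :
    x ∈ domZ (N+2) ↔ -((N/2 : ℕ):ℤ) - 1 ≤ x ∧ x ≤ ((N/2:ℕ):ℤ) + 1 ∧ (N % 2 = 0 → x ≠ 0) := by
  rw [mem_domZ]
  have h1 : (N+2)/2 = N/2+1 := by omega
  have h2 : (N+2)%2 = N%2 := by omega
  rw [h1, h2]; push_cast; omega

section Sigma

variable {N : ℕ} {σ : Equiv.Perm ℤ}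

lemma sigma_mem (h : ∀ x : ℤ, x ∉ domZ N → σ x = x) {x : ℤ} (hx : x ∈ domZ N) :
    σ x ∈ domZ N := by
  by_contra hc
  have h1 := h _ hc
  have h2 := σ.injective h1
  rw [h2] at hc; exact hc hx

local notation "KK" => ((N/2 : ℕ):ℤ) + 1

lemma K_mem : (KK) ∈ domZ (N+2) := by rw [mem_domZ2]; omega

lemma m_mem (hσ : IsOddPerm (N+2) σ) : σ KK ∈ domZ (N+2) := sigma_mem hσ.1 K_mem

lemma m_ne_zero (hσ : IsOddPerm (N+2) σ) : σ KK ≠ 0 := by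
  intro h0
  have h1 : σ (-KK) = -σ KK := hσ.2 _
  have h2 : σ (-KK) = σ KK := by rw [h1, h0]; ring
  have := σ.injective h2
  omega

lemma absm_pos (hσ : IsOddPerm (N+2) σ) : 1 ≤ |σ KK| := by
  have := m_ne_zero hσ
  rcases abs_cases (σ KK) with ⟨h, _⟩ | ⟨h, _⟩ <;> omega

lemma absm_le (hσ : IsOddPerm (N+2) σ) : |σ KK| ≤ ((N/2:ℕ):ℤ) + 1 := by
  have := m_mem hσ; rw [mem_domZ2] at this
  rcases abs_cases (σ KK) with ⟨h, _⟩ | ⟨h, _⟩ <;> omega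

lemma domZ_subset {x : ℤ} (hx : x ∈ domZ N) : x ∈ domZ (N+2) := by
  rw [mem_domZ] at hx; rw [mem_domZ2]; omega

lemma ne_K {x : ℤ} (hx : x ∈ domZ N) : x ≠ KK ∧ x ≠ -KK := by
  rw [mem_domZ] at hx; omega

lemma sigma_avoid (hσ : IsOddPerm (N+2) σ) {x : ℤ} (hx : x ∈ domZ N) :
    σ x ∈ domZ (N+2) ∧ σ x ≠ σ KK ∧ σ x ≠ -σ KK := by
  have h1 : σ x ∈ domZ (N+2) := sigma_mem hσ.1 (domZ_subset hx)
  have hne := ne_K (N := N) hx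
  refine ⟨h1, ?_, ?_⟩
  · intro h; exact hne.1 (σ.injective h)
  · intro h
    have h2 : σ x = σ (-KK) := by rw [hσ.2]; exact h
    exact hne.2 (σ.injective h2)

lemma sigma_avoid_abs (hσ : IsOddPerm (N+2) σ) {x : ℤ} (hx : x ∈ domZ N) :
    σ x ≠ |σ KK| ∧ σ x ≠ -|σ KK| := by
  obtain ⟨h1, h2, h3⟩ := sigma_avoid hσ hx
  rcases abs_cases (σ KK) with ⟨h, _⟩ | ⟨h, _⟩ <;> rw [h] <;> omega

lemma phi_sigma_mem (hσ : IsOddPerm (N+2) σ) {x : ℤ} (hx : x ∈ domZ N) :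
    phiZ |σ KK| (σ x) ∈ domZ N := by
  have h1 := (sigma_avoid hσ hx).1
  obtain ⟨h2, h3⟩ := sigma_avoid_abs hσ hx
  rw [mem_domZ2] at h1
  have hp := absm_pos hσ
  have hl := absm_le hσ
  rw [mem_domZ]
  rcases abs_cases (σ KK) with ⟨h, _⟩ | ⟨h, _⟩ <;>
    rw [h] at h2 h3 hp hl ⊢ <;> unfold phiZ <;> split_ifs <;> omega

lemma psi_phi_sigma (hσ : IsOddPerm (N+2) σ) {x : ℤ} (hx : x ∈ domZ N) :
    psiZ |σ KK| (phiZ |σ KK| (σ x)) = σ x := by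
  obtain ⟨h2, h3⟩ := sigma_avoid_abs hσ hx
  exact psi_phi (absm_pos hσ) h2 h3

lemma psi_mem (hσ : IsOddPerm (N+2) σ) {y : ℤ} (hy : y ∈ domZ N) :
    psiZ |σ KK| y ∈ domZ (N+2) ∧ psiZ |σ KK| y ≠ σ KK ∧ psiZ |σ KK| y ≠ -σ KK := by
  rw [mem_domZ] at hy
  have hp := absm_pos hσ
  have hl := absm_le hσ
  rw [mem_domZ2]
  rcases abs_cases (σ KK) with ⟨h, _⟩ | ⟨h, _⟩ <;>
    rw [h] at hp hl ⊢ <;> unfold psiZ <;> split_ifs <;> omega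

noncomputable def tau (hσ : IsOddPerm (N+2) σ) : Equiv.Perm ℤ where
  toFun x := if x ∈ domZ N then phiZ |σ KK| (σ x) else x
  invFun y := if y ∈ domZ N then σ⁻¹ (psiZ |σ KK| y) else y
  left_inv := by
    intro x
    dsimp only
    by_cases hx : x ∈ domZ N
    · rw [if_pos hx, if_pos (phi_sigma_mem hσ hx), psi_phi_sigma hσ hx]
      exact σ.symm_apply_apply x
    · rw [if_neg hx, if_neg hx]
  right_inv := by
    intro y
    dsimp only
    by_cases hy : y ∈ domZ N
    · rw [if_pos hy]
      obtain ⟨h1, h2, h3⟩ := psi_mem hσ hy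
      have hmem : σ⁻¹ (psiZ |σ KK| y) ∈ domZ N := by
        have hD' : σ⁻¹ (psiZ |σ KK| y) ∈ domZ (N+2) := by
          by_contra hc
          have h4 := hσ.1 _ hc
          have h5 : σ (σ⁻¹ (psiZ |σ KK| y)) = psiZ |σ KK| y := perm_apply_inv_self σ _
          rw [h4] at h5
          rw [h5] at hc; exact hc h1
        rw [mem_domZ2] at hD'
        rw [mem_domZ]
        have hK1 : σ⁻¹ (psiZ |σ KK| y) ≠ KK := by
          intro h; apply h2
          have h' := congrArg σ h
          rwa [perm_apply_inv_self] at h'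
        have hK2 : σ⁻¹ (psiZ |σ KK| y) ≠ -KK := by
          intro h; apply h3
          have h' := congrArg σ h
          rw [perm_apply_inv_self] at h'
          rw [h']; exact hσ.2 _
        omega
      rw [if_pos hmem, perm_apply_inv_self, phi_psi (absm_pos hσ)]
    · rw [if_neg hy, if_neg hy]

lemma tau_apply (hσ : IsOddPerm (N+2) σ) {x : ℤ} (hx : x ∈ domZ N) :
    tau hσ x = phiZ |σ KK| (σ x) := by
  simp only [tau, Equiv.coe_fn_mk, if_pos hx]

lemma tau_apply_not (hσ : IsOddPerm (N+2) σ) {x : ℤ} (hx : x ∉ domZ N) : tau hσ x = x := by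
  simp only [tau, Equiv.coe_fn_mk, if_neg hx]

lemma tau_odd (hσ : IsOddPerm (N+2) σ) : IsOddPerm N (tau hσ) := by
  constructor
  · intro x hx; exact tau_apply_not hσ hx
  · intro x
    by_cases hx : x ∈ domZ N
    · have hnx : -x ∈ domZ N := by rw [mem_domZ] at hx ⊢; omega
      rw [tau_apply hσ hnx, tau_apply hσ hx, hσ.2, phi_neg (absm_pos hσ)]
    · have hnx : -x ∉ domZ N := by rw [mem_domZ] at hx ⊢; omega
      rw [tau_apply_not hσ hnx, tau_apply_not hσ hx]

lemma tau_lis {n : ℕ} (hσ : IsOddPerm (N+2) σ) (hlis : LisLE (N+2) n σ) :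
    LisLE N n (tau hσ) := by
  intro s hs hinc
  refine hlis s (fun x hx => domZ_subset (hs hx)) ?_
  intro i hi j hj hij
  have h := hinc i hi j hj hij
  rw [tau_apply hσ (hs hi), tau_apply hσ (hs hj)] at h
  exact phi_mono (absm_pos hσ) h

lemma mem_split {x : ℤ} (hx : x ∈ domZ (N+2)) : x ∈ domZ N ∨ x = KK ∨ x = -KK := by
  rw [mem_domZ2] at hx; rw [mem_domZ]; omega

lemma sigma_eq_of_tau_eq {σ1 σ2 : Equiv.Perm ℤ}
    (h1 : IsOddPerm (N+2) σ1) (h2 : IsOddPerm (N+2) σ2)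
    (hm : σ1 KK = σ2 KK) (ht : tau h1 = tau h2) : σ1 = σ2 := by
  ext x
  by_cases hx2 : x ∈ domZ (N+2)
  · rcases mem_split hx2 with hx | hx | hx
    · have he : tau h1 x = tau h2 x := by rw [ht]
      rw [tau_apply h1 hx, tau_apply h2 hx] at he
      have e1 := psi_phi_sigma h1 hx
      have e2 := psi_phi_sigma h2 hx
      rw [← e1, ← e2, he, hm]
    · rw [hx, hm]
    · rw [hx, h1.2, h2.2, hm]
  · rw [h1.1 _ hx2, h2.1 _ hx2]

end Sigma

lemma odd_finite (N n : ℕ) : Finite {σ : Equiv.Perm ℤ // IsOddPerm N σ ∧ LisLE N n σ} := by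
  have hm : ∀ (σ : {σ : Equiv.Perm ℤ // IsOddPerm N σ ∧ LisLE N n σ}) (x : domZ N),
      (σ.1 x.1) ∈ domZ N := fun σ x => sigma_mem σ.2.1.1 x.2
  apply Finite.of_injective
    (fun σ => (fun x => (⟨σ.1 x.1, hm σ x⟩ : domZ N) : domZ N → domZ N))
  intro σ1 σ2 h
  ext x
  by_cases hx : x ∈ domZ N
  · exact congrArg Subtype.val (congrFun h ⟨x, hx⟩)
  · rw [σ1.2.1.1 x hx, σ2.2.1.1 x hx]

lemma card_erase (N : ℕ) : ((domZ (N+2)).erase 0).card = 2 * (N/2) + 2 := by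
  have h1 : (N+2)/2 = N/2+1 := by omega
  have hIcc : (Finset.Icc (-(((N+2)/2 : ℕ) : ℤ)) (((N+2)/2 : ℕ) : ℤ)).card = 2*(N/2) + 3 := by
    rw [Int.card_Icc, h1]
    push_cast
    omega
  have h0 : (0:ℤ) ∈ Finset.Icc (-(((N+2)/2 : ℕ) : ℤ)) (((N+2)/2 : ℕ) : ℤ) := by
    simp only [Finset.mem_Icc]
    constructor <;> [omega; positivity]
  unfold domZ
  split_ifs with h
  · rw [Finset.erase_idem, Finset.card_erase_of_mem h0, hIcc]
    omega
  · rw [Finset.card_erase_of_mem h0, hIcc]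
    omega


theorem bN_le (n N : ℕ) : bN (N + 2) n ≤ (2 * (N / 2) + 2) * bN N n := by
  classical
  set S := ((domZ (N+2)).erase 0 : Finset ℤ) with hS
  set T := {σ : Equiv.Perm ℤ // IsOddPerm N σ ∧ LisLE N n σ} with hT
  haveI hfin : Finite T := odd_finite N n
  have key : bN (N+2) n ≤ Nat.card ({x : ℤ // x ∈ S} × T) := by
    apply Nat.card_le_card_of_injective
      (fun σp : {σ : Equiv.Perm ℤ // IsOddPerm (N+2) σ ∧ LisLE (N+2) n σ} =>
        ((⟨σp.1 (((N/2 : ℕ):ℤ) + 1),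
          Finset.mem_erase.mpr ⟨m_ne_zero σp.2.1, m_mem σp.2.1⟩⟩ : {x : ℤ // x ∈ S}),
        (⟨tau σp.2.1, tau_odd σp.2.1, tau_lis σp.2.1 σp.2.2⟩ : T)))
    intro σ1 σ2 h
    rw [Prod.mk.injEq, Subtype.mk.injEq, Subtype.mk.injEq] at h
    exact Subtype.ext (sigma_eq_of_tau_eq σ1.2.1 σ2.2.1 h.1 h.2)
  calc bN (N+2) n ≤ Nat.card ({x : ℤ // x ∈ S} × T) := key
    _ = Nat.card {x : ℤ // x ∈ S} * Nat.card T := Nat.card_prod _ _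
    _ = (2 * (N / 2) + 2) * bN N n := by
        rw [Nat.card_eq_finsetCard, card_erase]; rfl

end BNMono


/-- Monotonicity lemma: b_{N+2,n} ≤ (2k+2)·b_{N,n} with k = ⌊N/2⌋; equivalently the
probabilities F_N(n) = b_{N,n}/(2^k k!) satisfy F_{N+2}(n) ≤ F_N(n). -/
theorem bN_monotonicity (n N : ℕ) (hn : 1 ≤ n) :
    bN (N + 2) n ≤ (2 * (N / 2) + 2) * bN N n ∧
    (bN (N + 2) n : ℝ) / (2 ^ ((N + 2) / 2) * (((N + 2) / 2).factorial : ℝ)) ≤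
      (bN N n : ℝ) / (2 ^ (N / 2) * ((N / 2).factorial : ℝ)) := by
  have h1 := BNMono.bN_le n N
  refine ⟨h1, ?_⟩
  have h2 : (N+2)/2 = N/2+1 := by omega
  rw [h2]
  set k := N / 2 with hk
  have hD2 : (2:ℝ) ^ (k+1) * ((k+1).factorial : ℝ) =
      (2*(k:ℝ)+2) * (2 ^ k * (k.factorial : ℝ)) := by
    rw [pow_succ, Nat.factorial_succ]; push_cast; ring
  have hc : ((bN (N+2) n : ℝ)) ≤ (2*(k:ℝ)+2) * (bN N n) := by exact_mod_cast h1
  calc (bN (N+2) n : ℝ) / (2 ^ (k+1) * ((k+1).factorial : ℝ))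
      = (bN (N+2) n : ℝ) / ((2*(k:ℝ)+2) * (2 ^ k * (k.factorial:ℝ))) := by rw [hD2]
    _ ≤ ((2*(k:ℝ)+2) * (bN N n)) / ((2*(k:ℝ)+2) * (2 ^ k * (k.factorial:ℝ))) := by
        gcongr
    _ = (bN N n : ℝ) / (2 ^ k * (k.factorial:ℝ)) := mul_div_mul_left _ _ (by positivity)
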